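/- For an n×n complex matrix A, the distance to instability defined as the infimum of ‖Δ‖₂ over all perturbations Δ such that A+Δ has an eigenvalue in the closed right half-plane equals the infimum over z in the closed right half-plane of the smallest singular value of A − zI. -/

import Mathlib

open Matrix

/-- Euclidean (ℓ²) norm of a finite complex vector. -/
noncomputable def enormL2 {ι : Type*} [Fintype ι] (v : ι → ℂ) : ℝ :=
  ‖(EuclideanSpace.equiv ι ℂ).symm v‖

/-- Smallest singular value of a (possibly rectangular) complex matrix,
characterized as the infimum of ‖Mw‖₂ over unit vectors w. -/
noncomputable def sigmaMin {m l : Type*} [Fintype m] [Fintype l] (M : Matrix m l ℂ) : ℝ :=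
  sInf {r : ℝ | ∃ w : l → ℂ, enormL2 w = 1 ∧ r = enormL2 (M.mulVec w)}

/-- Spectral norm of a complex matrix: supremum of ‖Mw‖₂ over unit vectors w. -/
noncomputable def specNorm {m l : Type*} [Fintype m] [Fintype l] (M : Matrix m l ℂ) : ℝ :=
  sSup {r : ℝ | ∃ w : l → ℂ, enormL2 w = 1 ∧ r = enormL2 (M.mulVec w)}

/-- Distance to instability: inf over the closed right half-plane of σ_min(A − zI). -/
noncomputable def distInstab {n : ℕ} (A : Matrix (Fin n) (Fin n) ℂ) : ℝ :=
  sInf {r : ℝ | ∃ z : ℂ, 0 ≤ z.re ∧ r = sigmaMin (A - z • 1)}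

namespace DistInstabAux

variable {n : ℕ}

noncomputable def toE (v : Fin n → ℂ) : EuclideanSpace ℂ (Fin n) :=
  (EuclideanSpace.equiv (Fin n) ℂ).symm v

lemma enorm_def (v : Fin n → ℂ) : enormL2 v = ‖toE v‖ := rfl

lemma toE_mulVec (M : Matrix (Fin n) (Fin n) ℂ) (x : EuclideanSpace ℂ (Fin n)) :
    Matrix.toEuclideanLin M x = toE (M.mulVec ((EuclideanSpace.equiv (Fin n) ℂ) x)) := rfl

lemma equiv_toE (v : Fin n → ℂ) : (EuclideanSpace.equiv (Fin n) ℂ) (toE v) = v :=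
  (EuclideanSpace.equiv (Fin n) ℂ).apply_symm_apply v

lemma toE_equiv (x : EuclideanSpace ℂ (Fin n)) : toE ((EuclideanSpace.equiv (Fin n) ℂ) x) = x :=
  (EuclideanSpace.equiv (Fin n) ℂ).symm_apply_apply x

lemma dot_inner (w x : Fin n → ℂ) : star w ⬝ᵥ x = @inner ℂ _ _ (toE w) (toE x) := by
  simp [toE, EuclideanSpace.inner_eq_star_dotProduct, dotProduct_comm]

lemma enorm_smul (c : ℂ) (v : Fin n → ℂ) : enormL2 (c • v) = ‖c‖ * enormL2 v := by
  rw [enorm_def, enorm_def]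
  have : toE (c • v) = c • toE v := (EuclideanSpace.equiv (Fin n) ℂ).symm.map_smul c v
  rw [this, norm_smul]

lemma enorm_neg (v : Fin n → ℂ) : enormL2 (-v) = enormL2 v := by
  rw [enorm_def, enorm_def]
  have : toE (-v) = -(toE v) := map_neg (EuclideanSpace.equiv (Fin n) ℂ).symm v
  rw [this, norm_neg]

lemma enorm_nonneg (v : Fin n → ℂ) : 0 ≤ enormL2 v := norm_nonneg _

lemma enorm_pos {v : Fin n → ℂ} (hv : v ≠ 0) : 0 < enormL2 v := by
  rw [enorm_def]
  rw [norm_pos_iff]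
  intro h
  apply hv
  have := congrArg (EuclideanSpace.equiv (Fin n) ℂ) h
  rwa [equiv_toE, map_zero] at this

lemma ne_zero_of_enorm_one {v : Fin n → ℂ} (hv : enormL2 v = 1) : v ≠ 0 := by
  intro h
  subst h
  have : toE (0 : Fin n → ℂ) = 0 := map_zero (EuclideanSpace.equiv (Fin n) ℂ).symm
  rw [enorm_def, this, norm_zero] at hv
  exact zero_ne_one hv

/-- The set appearing in `sigmaMin` and `specNorm`. -/
def SV (M : Matrix (Fin n) (Fin n) ℂ) : Set ℝ :=
  {r : ℝ | ∃ w : Fin n → ℂ, enormL2 w = 1 ∧ r = enormL2 (M.mulVec w)}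

lemma SV_eq_image (M : Matrix (Fin n) (Fin n) ℂ) :
    SV M = (fun x : EuclideanSpace ℂ (Fin n) => ‖Matrix.toEuclideanLin M x‖) ''
      Metric.sphere (0 : EuclideanSpace ℂ (Fin n)) 1 := by
  ext r
  constructor
  · rintro ⟨w, hw, rfl⟩
    refine ⟨toE w, ?_, ?_⟩
    · rw [mem_sphere_iff_norm, sub_zero, ← enorm_def]; exact hw
    · show ‖(Matrix.toEuclideanLin M) (toE w)‖ = _
      rw [toE_mulVec, equiv_toE, ← enorm_def]
  · rintro ⟨x, hx, rfl⟩
    refine ⟨(EuclideanSpace.equiv (Fin n) ℂ) x, ?_, ?_⟩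
    · rw [enorm_def, toE_equiv]
      simpa using hx
    · show ‖(Matrix.toEuclideanLin M) x‖ = _
      rw [toE_mulVec, ← enorm_def]

lemma SV_isCompact (M : Matrix (Fin n) (Fin n) ℂ) : IsCompact (SV M) := by
  rw [SV_eq_image]
  exact (isCompact_sphere _ _).image
    ((Matrix.toEuclideanLin M).continuous_of_finiteDimensional.norm)

lemma SV_nonempty (hn : 0 < n) (M : Matrix (Fin n) (Fin n) ℂ) : (SV M).Nonempty := by
  haveI : Nonempty (Fin n) := ⟨⟨0, hn⟩⟩
  refine ⟨_, (EuclideanSpace.equiv (Fin n) ℂ) (EuclideanSpace.single ⟨0, hn⟩ (1 : ℂ)), ?_, rfl⟩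
  rw [enorm_def, toE_equiv]
  simp

lemma SV_nonneg (M : Matrix (Fin n) (Fin n) ℂ) : ∀ r ∈ SV M, 0 ≤ r := by
  rintro r ⟨w, hw, rfl⟩; exact enorm_nonneg _

lemma sigmaMin_mem (hn : 0 < n) (M : Matrix (Fin n) (Fin n) ℂ) : sigmaMin M ∈ SV M :=
  (SV_isCompact M).sInf_mem (SV_nonempty hn M)

lemma sigmaMin_le (M : Matrix (Fin n) (Fin n) ℂ) {w : Fin n → ℂ} (hw : enormL2 w = 1) :
    sigmaMin M ≤ enormL2 (M.mulVec w) :=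
  csInf_le ((SV_isCompact M).bddBelow) ⟨w, hw, rfl⟩

lemma le_specNorm (M : Matrix (Fin n) (Fin n) ℂ) {w : Fin n → ℂ} (hw : enormL2 w = 1) :
    enormL2 (M.mulVec w) ≤ specNorm M :=
  le_csSup ((SV_isCompact M).bddAbove) ⟨w, hw, rfl⟩

lemma specNorm_nonneg (hn : 0 < n) (M : Matrix (Fin n) (Fin n) ℂ) : 0 ≤ specNorm M := by
  obtain ⟨r, w, hw, rfl⟩ := SV_nonempty hn M
  exact le_trans (enorm_nonneg _) (le_specNorm M hw)

lemma sigmaMin_nonneg (M : Matrix (Fin n) (Fin n) ℂ) : 0 ≤ sigmaMin M :=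
  Real.sInf_nonneg (SV_nonneg M)

lemma vecMulVec_mulVec' (u w x : Fin n → ℂ) :
    (vecMulVec u (star w)).mulVec x = (star w ⬝ᵥ x) • u := by
  funext i
  simp [vecMulVec, mulVec, dotProduct, Finset.mul_sum, mul_comm, mul_left_comm]

lemma specNorm_rankOne (u : Fin n → ℂ) {w : Fin n → ℂ} (hw : enormL2 w = 1) :
    specNorm (vecMulVec u (star w)) = enormL2 u := by
  have hdotw : star w ⬝ᵥ w = 1 := by
    rw [dot_inner, inner_self_eq_norm_sq_to_K, ← enorm_def, hw]
    norm_num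
  have hmem : enormL2 u ∈ SV (vecMulVec u (star w)) := by
    refine ⟨w, hw, ?_⟩
    rw [vecMulVec_mulVec', hdotw, one_smul]
  apply le_antisymm
  · apply csSup_le ⟨_, hmem⟩
    rintro r ⟨x, hx, rfl⟩
    rw [vecMulVec_mulVec', enorm_smul]
    have : ‖star w ⬝ᵥ x‖ ≤ 1 := by
      rw [dot_inner]
      calc ‖@inner ℂ _ _ (toE w) (toE x)‖ ≤ ‖toE w‖ * ‖toE x‖ := norm_inner_le_norm _ _
        _ = 1 := by rw [← enorm_def, ← enorm_def, hw, hx, mul_one]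
    calc ‖star w ⬝ᵥ x‖ * enormL2 u ≤ 1 * enormL2 u :=
          mul_le_mul_of_nonneg_right this (enorm_nonneg _)
      _ = enormL2 u := one_mul _
  · exact le_csSup ((SV_isCompact _).bddAbove) hmem

end DistInstabAux

open DistInstabAux in
/-- the perturbation-based distance to instability equals
inf over the closed right half-plane of the smallest singular value of A − zI. -/
theorem distInstab_eq_inf_sigmaMin (n : ℕ) (A : Matrix (Fin n) (Fin n) ℂ) :
    sInf {r : ℝ | ∃ Δ : Matrix (Fin n) (Fin n) ℂ,
        (∃ z : ℂ, 0 ≤ z.re ∧ (A + Δ - z • 1).det = 0) ∧ r = specNorm Δ}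
      = sInf {r : ℝ | ∃ z : ℂ, 0 ≤ z.re ∧ r = sigmaMin (A - z • 1)} := by
  rcases Nat.eq_zero_or_pos n with h0 | hn
  · subst h0
    have hL : {r : ℝ | ∃ Δ : Matrix (Fin 0) (Fin 0) ℂ,
        (∃ z : ℂ, 0 ≤ z.re ∧ (A + Δ - z • 1).det = 0) ∧ r = specNorm Δ} = ∅ := by
      ext r
      simp only [Set.mem_setOf_eq, Set.mem_empty_iff_false, iff_false]
      rintro ⟨Δ, ⟨z, _, hdet⟩, _⟩
      rw [Matrix.det_fin_zero] at hdet
      exact one_ne_zero hdet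
    have hsig : ∀ M : Matrix (Fin 0) (Fin 0) ℂ, sigmaMin M = 0 := by
      intro M
      have : {r : ℝ | ∃ w : Fin 0 → ℂ, enormL2 w = 1 ∧ r = enormL2 (M.mulVec w)} = ∅ := by
        ext r
        simp only [Set.mem_setOf_eq, Set.mem_empty_iff_false, iff_false]
        rintro ⟨w, hw, _⟩
        have hw0 : w = 0 := Subsingleton.elim _ _
        exact ne_zero_of_enorm_one hw hw0
      rw [sigmaMin, this, Real.sInf_empty]
    have hR : {r : ℝ | ∃ z : ℂ, 0 ≤ z.re ∧ r = sigmaMin (A - z • 1)} = {0} := by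
      ext r
      simp only [Set.mem_setOf_eq, Set.mem_singleton_iff]
      constructor
      · rintro ⟨z, _, rfl⟩; exact hsig _
      · rintro rfl; exact ⟨0, by norm_num, (hsig _).symm⟩
    rw [hL, hR, Real.sInf_empty, csInf_singleton]
  · haveI : Nonempty (Fin n) := ⟨⟨0, hn⟩⟩
    set L := {r : ℝ | ∃ Δ : Matrix (Fin n) (Fin n) ℂ,
        (∃ z : ℂ, 0 ≤ z.re ∧ (A + Δ - z • 1).det = 0) ∧ r = specNorm Δ} with hLdef
    set R := {r : ℝ | ∃ z : ℂ, 0 ≤ z.re ∧ r = sigmaMin (A - z • 1)} with hRdef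
    have hLbdd : BddBelow L := by
      refine ⟨0, ?_⟩
      rintro r ⟨Δ, _, rfl⟩
      exact specNorm_nonneg hn Δ
    have hRbdd : BddBelow R := by
      refine ⟨0, ?_⟩
      rintro r ⟨z, _, rfl⟩
      exact sigmaMin_nonneg _
    have hLne : L.Nonempty := by
      refine ⟨specNorm (-A), -A, ⟨0, le_refl 0, ?_⟩, rfl⟩
      simp [Matrix.det_zero]
    have hsub : R ⊆ L := by
      rintro r ⟨z, hz, rfl⟩
      obtain ⟨w, hw, hval⟩ := sigmaMin_mem hn (A - z • 1)
      set u : Fin n → ℂ := -((A - z • 1).mulVec w) with hu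
      refine ⟨vecMulVec u (star w), ⟨z, hz, ?_⟩, ?_⟩
      · rw [← Matrix.exists_mulVec_eq_zero_iff]
        refine ⟨w, ne_zero_of_enorm_one hw, ?_⟩
        have : A + vecMulVec u (star w) - z • 1 = (A - z • 1) + vecMulVec u (star w) := by
          rw [add_sub_right_comm]
        rw [this, Matrix.add_mulVec, vecMulVec_mulVec']
        have hdotw : star w ⬝ᵥ w = 1 := by
          rw [dot_inner, inner_self_eq_norm_sq_to_K, ← enorm_def, hw]
          norm_num
        rw [hdotw, one_smul, hu]
        simp
      · rw [specNorm_rankOne u hw, hu, enorm_neg, hval]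
    have h1 : sInf L ≤ sInf R := csInf_le_csInf hLbdd ⟨_, ⟨0, le_refl 0, rfl⟩⟩ hsub
    have h2 : sInf R ≤ sInf L := by
      apply le_csInf hLne
      rintro r ⟨Δ, ⟨z, hz, hdet⟩, rfl⟩
      obtain ⟨v, hv0, hv⟩ := (Matrix.exists_mulVec_eq_zero_iff).mpr hdet
      set c : ℂ := (((enormL2 v)⁻¹ : ℝ) : ℂ) with hc
      set w : Fin n → ℂ := c • v with hwdef
      have hvpos : 0 < enormL2 v := enorm_pos hv0
      have hw : enormL2 w = 1 := by
        rw [hwdef, enorm_smul, hc]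
        rw [Complex.norm_real, Real.norm_eq_abs, abs_of_nonneg (inv_nonneg.mpr hvpos.le)]
        field_simp
      have hmul : (A + Δ - z • 1).mulVec w = 0 := by
        rw [hwdef, Matrix.mulVec_smul, hv, smul_zero]
      have hkey : (A - z • 1).mulVec w = -(Δ.mulVec w) := by
        have : A - z • 1 = (A + Δ - z • 1) - Δ := by
          rw [add_sub_right_comm, add_sub_cancel_right]
        rw [this, Matrix.sub_mulVec, hmul, zero_sub]
      calc sInf R ≤ sigmaMin (A - z • 1) := csInf_le hRbdd ⟨z, hz, rfl⟩
        _ ≤ enormL2 ((A - z • 1).mulVec w) := sigmaMin_le _ hw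
        _ = enormL2 (Δ.mulVec w) := by rw [hkey, enorm_neg]
        _ ≤ specNorm Δ := le_specNorm _ hw
    exact le_antisymm h1 h2
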